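/- Let α > 1/2, let γ = (γ_j)_{j≥1} ∈ (0,1]^ℕ, let d ∈ ℕ, and let λ ∈ [1/2, α). For the product weights γ_u = ∏_{j∈u} γ_j one has V_d(α/λ, γ^{1/λ}) = −1 + ∏_{j=1}^{d} (1 + 2 γ_j^{1/λ} ζ(α/λ)) ≤ exp( 2 ζ(α/λ) · (Σ_{j=1}^{d} γ_j^{1/α})^{α/λ} ). In particular, if Σ_{j≥1} γ_j^{1/α} < ∞, then V_d(α/λ, γ^{1/λ}) is bounded above uniformly in d. -/

import Mathlib

open scoped BigOperators Classical

noncomputable section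

/-- Real Riemann zeta value `ζ(β) = Σ_{k≥1} k^{-β}` (for `β > 1`). -/
def zetaR (β : ℝ) : ℝ := ∑' k : ℕ, ((k + 1 : ℝ)) ^ (-β)

/-- Support of a frequency vector. -/
def suppF {d : ℕ} (h : Fin d → ℤ) : Finset (Fin d) := Finset.univ.filter (fun j => h j ≠ 0)

/-- The Korobov weight function `r_{d,α,γ}`. -/
def rKor (d : ℕ) (α : ℝ) (γ : Finset (Fin d) → ℝ) (h : Fin d → ℤ) : ℝ :=
  if h = 0 then 1 else (γ (suppF h))⁻¹ * ∏ j ∈ suppF h, |(h j : ℝ)| ^ α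

/-- `V_d(β, γ) = Σ_{∅ ≠ u ⊆ {1,…,d}} γ_u (2ζ(β))^{|u|}`. -/
def Vd (d : ℕ) (β : ℝ) (γ : Finset (Fin d) → ℝ) : ℝ :=
  ∑ u ∈ Finset.univ.filter (fun u : Finset (Fin d) => u.Nonempty), γ u * (2 * zetaR β) ^ u.card

/-- The set of generating vectors `{1,…,p-1}^d`. -/
def genSet (d p : ℕ) : Finset (Fin d → ℤ) :=
  Fintype.piFinset (fun _ => Finset.Icc (1 : ℤ) ((p : ℤ) - 1))

/-- Nonzero dual lattice points: `h ≠ 0` with `h·z ≡ 0 (mod p)`. -/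
def dualLat (d p : ℕ) (z : Fin d → ℤ) : Set (Fin d → ℤ) :=
  {h | h ≠ 0 ∧ (p : ℤ) ∣ ∑ j, h j * z j}

/-- Worst-case error of the lattice rule `Q_p^z` on the Korobov class. -/
def Edet (d : ℕ) (α : ℝ) (γ : Finset (Fin d) → ℝ) (p : ℕ) (z : Fin d → ℤ) : ℝ :=
  Real.sqrt (∑' h : dualLat d p z, ((rKor d α γ h.1) ^ 2)⁻¹)

/-- Quadrature error of the lattice rule `Q_p^z` on the function with
Fourier coefficients `a`. -/
def err (d p : ℕ) (z : Fin d → ℤ) (a : (Fin d → ℤ) → ℂ) : ℂ :=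
  ∑' h : dualLat d p z, a h.1

/-- The Korobov norm of the coefficient sequence `a`. -/
def korNorm (d : ℕ) (α : ℝ) (γ : Finset (Fin d) → ℝ) (a : (Fin d → ℤ) → ℂ) : ℝ :=
  Real.sqrt (∑' h : Fin d → ℤ, (rKor d α γ h) ^ 2 * ‖a h‖ ^ 2)

/-- Membership of the coefficient sequence in the Korobov class (`‖a‖ < ∞`). -/
def korSummable (d : ℕ) (α : ℝ) (γ : Finset (Fin d) → ℝ) (a : (Fin d → ℤ) → ℂ) : Prop :=
  Summable (fun h : Fin d → ℤ => (rKor d α γ h) ^ 2 * ‖a h‖ ^ 2)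

/-- The median (the `(N+1)/2`-th smallest value for odd `N`). -/
def medianR {N : ℕ} (f : Fin N → ℝ) : ℝ :=
  (List.insertionSort (· ≤ ·) (List.ofFn f)).getD ((N - 1) / 2) 0

/-- The median of complex numbers: medians of real and imaginary parts. -/
def medianC {N : ℕ} (f : Fin N → ℂ) : ℂ :=
  (medianR fun k => (f k).re) + (medianR fun k => (f k).im) * Complex.I

/-- The set `P_n` of primes `p` with `⌈n/2⌉ + 1 ≤ p ≤ n`. -/
def Pset (n : ℕ) : Finset ℕ := (Finset.Icc ((n + 1) / 2 + 1) n).filter Nat.Prime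

/-- The sample space of a single draw: pairs `(p, z)` with `p ∈ P_n`,
`z ∈ {1,…,p-1}^d`. -/
def allPairs (n d : ℕ) : Finset ((_ : ℕ) × (Fin d → ℤ)) :=
  (Pset n).sigma (fun p => genSet d p)

/-- The probability of one pair `(p,z)`: `p` uniform on `P_n`, and given `p`,
`z` uniform on `{1,…,p-1}^d`. -/
def pairWeight (n d : ℕ) (pz : (_ : ℕ) × (Fin d → ℤ)) : ℝ :=
  (((Pset n).card : ℝ))⁻¹ * (((pz.1 : ℝ) - 1) ^ d)⁻¹

/-- Number of repetitions used by the median algorithm `M_n`. -/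
def numReps (h : ℕ → ℝ) (n : ℕ) : ℕ := 2 * ⌈h n * Real.logb 2 n⌉₊ + 1

/-- Expectation, over the `N` independent draws of the median algorithm,
of a function `g` of the draws. -/
def expDraws (n d N : ℕ) (g : (Fin N → (_ : ℕ) × (Fin d → ℤ)) → ℝ) : ℝ :=
  ∑ ω ∈ Fintype.piFinset (fun _ : Fin N => allPairs n d),
    (∏ k, pairWeight n d (ω k)) * g ω

/-- Product weights `γ_u = ∏_{j ∈ u} γ_j`. -/
def prodW (d : ℕ) (γ : ℕ → ℝ) : Finset (Fin d) → ℝ := fun u => ∏ j ∈ u, γ (j : ℕ)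

private lemma zetaR_nonneg (β : ℝ) : 0 ≤ zetaR β :=
  tsum_nonneg (fun k => Real.rpow_nonneg (by positivity) _)

private lemma sum_rpow_le {ι : Type*} (s : Finset ι) (f : ι → ℝ)
    (hf : ∀ i ∈ s, 0 ≤ f i) {q : ℝ} (hq : 1 ≤ q) :
    ∑ i ∈ s, f i ^ q ≤ (∑ i ∈ s, f i) ^ q := by
  set S := ∑ i ∈ s, f i with hS
  have hS0 : 0 ≤ S := Finset.sum_nonneg hf
  rcases hS0.eq_or_lt with h0 | hpos
  · have hall : ∀ i ∈ s, f i = 0 := by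
      intro i hi
      exact (Finset.sum_eq_zero_iff_of_nonneg hf).mp h0.symm i hi
    have hqne : q ≠ 0 := by linarith
    rw [← h0, Real.zero_rpow hqne]
    apply le_of_eq
    refine Finset.sum_eq_zero (fun i hi => ?_)
    rw [hall i hi, Real.zero_rpow hqne]
  · have step : ∀ i ∈ s, f i ^ q ≤ S ^ (q - 1) * f i := by
      intro i hi
      rcases (hf i hi).eq_or_lt with h0 | hipos
      · rw [← h0, Real.zero_rpow (by linarith : q ≠ 0), mul_zero]
      · have h1 : f i ^ q = f i ^ (q - 1) * f i := by
          rw [← Real.rpow_add_one (ne_of_gt hipos)]; ring_nf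
        rw [h1]
        refine mul_le_mul_of_nonneg_right ?_ (hf i hi)
        exact Real.rpow_le_rpow (hf i hi) (Finset.single_le_sum hf hi) (by linarith)
    calc ∑ i ∈ s, f i ^ q ≤ ∑ i ∈ s, S ^ (q - 1) * f i := Finset.sum_le_sum step
      _ = S ^ (q - 1) * S := by rw [← Finset.mul_sum]
      _ = S ^ q := by rw [← Real.rpow_add_one (ne_of_gt hpos)]; ring_nf

private lemma part1 (α : ℝ) (γ : ℕ → ℝ) (hγ : ∀ j, γ j ∈ Set.Ioc (0 : ℝ) 1)
    (d : ℕ) (lam : ℝ) :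
    Vd d (α / lam) (fun u => prodW d γ u ^ (1 / lam)) =
      -1 + ∏ j : Fin d, (1 + 2 * γ (j : ℕ) ^ (1 / lam) * zetaR (α / lam)) := by
  set ζ := zetaR (α / lam) with hζ
  set x : Fin d → ℝ := fun j => 2 * γ (j : ℕ) ^ (1 / lam) * ζ with hx
  set f : Finset (Fin d) → ℝ := fun u => prodW d γ u ^ (1 / lam) * (2 * ζ) ^ u.card with hf
  have hterm : ∀ u : Finset (Fin d), f u = ∏ j ∈ u, x j := by
    intro u
    have : ∏ j ∈ u, x j = (∏ j ∈ u, γ (j : ℕ) ^ (1 / lam)) * (2 * ζ) ^ u.card := by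
      rw [← Finset.prod_const, ← Finset.prod_mul_distrib]
      exact Finset.prod_congr rfl (fun j _ => by ring)
    rw [this, hf]
    show (∏ j ∈ u, γ (j : ℕ)) ^ (1 / lam) * _ = _
    rw [← Real.finset_prod_rpow u _ (fun j _ => (hγ j).1.le) (1 / lam)]
  have hprod : ∏ j : Fin d, (1 + x j) = ∑ u : Finset (Fin d), f u := by
    have h1 : ∏ j : Fin d, (1 + x j) = ∏ j : Fin d, (x j + 1) := by
      exact Finset.prod_congr rfl (fun j _ => add_comm _ _)
    rw [h1, Finset.prod_add]
    simp only [Finset.prod_const_one, mul_one, Finset.powerset_univ]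
    exact (Finset.sum_congr rfl (fun u _ => (hterm u).symm))
  have hsplit : (∑ u ∈ Finset.univ.filter (fun u : Finset (Fin d) => u.Nonempty), f u)
      + (∑ u ∈ Finset.univ.filter (fun u : Finset (Fin d) => ¬ u.Nonempty), f u)
      = ∑ u : Finset (Fin d), f u :=
    Finset.sum_filter_add_sum_filter_not _ _ _
  have hempty : Finset.univ.filter (fun u : Finset (Fin d) => ¬ u.Nonempty) = {∅} := by
    ext u; simp [Finset.not_nonempty_iff_eq_empty]
  have hfempty : f ∅ = 1 := by
    simp [hf, prodW, Real.one_rpow]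
  have : Vd d (α / lam) (fun u => prodW d γ u ^ (1 / lam))
      = (∑ u : Finset (Fin d), f u) - 1 := by
    rw [Vd, ← hsplit, hempty, Finset.sum_singleton, hfempty]
    ring
  rw [this, ← hprod]; ring

private lemma part2 (α : ℝ) (hα : 1 / 2 < α) (γ : ℕ → ℝ) (hγ : ∀ j, γ j ∈ Set.Ioc (0 : ℝ) 1)
    (d : ℕ) (lam : ℝ) (hlam : lam ∈ Set.Ico (1 / 2 : ℝ) α) :
    Vd d (α / lam) (fun u => prodW d γ u ^ (1 / lam)) ≤
      Real.exp (2 * zetaR (α / lam) * (∑ j : Fin d, γ (j : ℕ) ^ (1 / α)) ^ (α / lam)) := by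
  have hαpos : 0 < α := lt_trans (by norm_num) hα
  have hlampos : 0 < lam := lt_of_lt_of_le (by norm_num) hlam.1
  set ζ := zetaR (α / lam) with hζdef
  have hζ : 0 ≤ ζ := zetaR_nonneg _
  set x : Fin d → ℝ := fun j => 2 * γ (j : ℕ) ^ (1 / lam) * ζ with hx
  have hx0 : ∀ j, 0 ≤ x j := fun j => by
    have := Real.rpow_nonneg (hγ j).1.le (1 / lam)
    positivity
  rw [part1 α γ hγ d lam]
  have h1 : ∏ j : Fin d, (1 + x j) ≤ Real.exp (∑ j : Fin d, x j) := by
    rw [Real.exp_sum]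
    refine Finset.prod_le_prod (fun j _ => by linarith [hx0 j]) (fun j _ => ?_)
    have := Real.add_one_le_exp (x j); linarith
  have hsum : ∑ j : Fin d, x j = 2 * ζ * ∑ j : Fin d, γ (j : ℕ) ^ (1 / lam) := by
    rw [Finset.mul_sum]
    exact Finset.sum_congr rfl (fun j _ => by ring)
  have hq : (1 : ℝ) ≤ α / lam := le_of_lt ((one_lt_div hlampos).mpr hlam.2)
  have hrw : ∀ j : Fin d, γ (j : ℕ) ^ (1 / lam) = (γ (j : ℕ) ^ (1 / α)) ^ (α / lam) := by
    intro j
    rw [← Real.rpow_mul (hγ (j : ℕ)).1.le]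
    congr 1
    field_simp
  have h2 : ∑ j : Fin d, γ (j : ℕ) ^ (1 / lam)
      ≤ (∑ j : Fin d, γ (j : ℕ) ^ (1 / α)) ^ (α / lam) := by
    calc ∑ j : Fin d, γ (j : ℕ) ^ (1 / lam)
        = ∑ j : Fin d, (γ (j : ℕ) ^ (1 / α)) ^ (α / lam) :=
          Finset.sum_congr rfl (fun j _ => hrw j)
      _ ≤ (∑ j : Fin d, γ (j : ℕ) ^ (1 / α)) ^ (α / lam) :=
          sum_rpow_le Finset.univ (fun j : Fin d => γ (j : ℕ) ^ (1 / α))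
            (fun j _ => Real.rpow_nonneg (hγ (j : ℕ)).1.le _) hq
  have h3 : 2 * ζ * ∑ j : Fin d, γ (j : ℕ) ^ (1 / lam)
      ≤ 2 * ζ * (∑ j : Fin d, γ (j : ℕ) ^ (1 / α)) ^ (α / lam) :=
    mul_le_mul_of_nonneg_left h2 (by linarith)
  have : ∏ j : Fin d, (1 + x j)
      ≤ Real.exp (2 * ζ * (∑ j : Fin d, γ (j : ℕ) ^ (1 / α)) ^ (α / lam)) := by
    refine h1.trans (Real.exp_le_exp.mpr ?_)
    rw [hsum]; exact h3
  linarith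

/-- behaviour of `V_d` for product weights. -/
theorem stmt_8 (α : ℝ) (hα : 1 / 2 < α) (γ : ℕ → ℝ) (hγ : ∀ j, γ j ∈ Set.Ioc (0 : ℝ) 1)
    (d : ℕ) (lam : ℝ) (hlam : lam ∈ Set.Ico (1 / 2 : ℝ) α) :
    Vd d (α / lam) (fun u => prodW d γ u ^ (1 / lam)) =
        -1 + ∏ j : Fin d, (1 + 2 * γ (j : ℕ) ^ (1 / lam) * zetaR (α / lam)) ∧
    Vd d (α / lam) (fun u => prodW d γ u ^ (1 / lam)) ≤
        Real.exp (2 * zetaR (α / lam) * (∑ j : Fin d, γ (j : ℕ) ^ (1 / α)) ^ (α / lam)) ∧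
    (Summable (fun j => γ j ^ (1 / α)) →
      ∃ B : ℝ, ∀ d' : ℕ, Vd d' (α / lam) (fun u => prodW d' γ u ^ (1 / lam)) ≤ B) := by
  have hαpos : 0 < α := lt_trans (by norm_num) hα
  have hlampos : 0 < lam := lt_of_lt_of_le (by norm_num) hlam.1
  have hζ : 0 ≤ zetaR (α / lam) := zetaR_nonneg _
  refine ⟨part1 α γ hγ d lam, part2 α hα γ hγ d lam hlam, fun hs => ?_⟩
  refine ⟨Real.exp (2 * zetaR (α / lam) * (∑' j : ℕ, γ j ^ (1 / α)) ^ (α / lam)),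
    fun d' => (part2 α hα γ hγ d' lam hlam).trans (Real.exp_le_exp.mpr ?_)⟩
  have hnn : ∀ j : ℕ, 0 ≤ γ j ^ (1 / α) := fun j => Real.rpow_nonneg (hγ j).1.le _
  have hle : ∑ j : Fin d', γ (j : ℕ) ^ (1 / α) ≤ ∑' j : ℕ, γ j ^ (1 / α) := by
    rw [Fin.sum_univ_eq_sum_range (fun j => γ j ^ (1 / α)) d']
    exact Summable.sum_le_tsum (Finset.range d') (fun j _ => hnn j) hs
  refine mul_le_mul_of_nonneg_left ?_ (by linarith)
  exact Real.rpow_le_rpow (Finset.sum_nonneg (fun j _ => hnn j)) hle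
    (le_of_lt (div_pos hαpos hlampos))

end
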